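/- Let X contain a bi-Lipschitz image of the Euclidean cube I^d. Then for every d' > d there exist a constant C > 0 and homotheties h_n : I^d → I^d of ratio C·n^{−d'} with images pairwise separated by distance at least C·n^{−d'}, and the map (x_1, x_2, …) ↦ closure of { h_n(x_n) : n ∈ ℕ } defines a homothetic embedding of ratio C from the Banach cube BC(I^d, ∞, (n^{−d'})) into the space C(I^d) of closed subsets of I^d with the Hausdorff metric. -/

import Mathlib

set_option maxHeartbeats 1000000

open Topology TopologicalSpace

def UnitCube (d : ℕ) : Type :=
  {x : EuclideanSpace ℝ (Fin d) // ∀ i, x i ∈ Set.Icc (0:ℝ) 1}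

noncomputable instance (d : ℕ) : MetricSpace (UnitCube d) :=
  inferInstanceAs (MetricSpace {x : EuclideanSpace ℝ (Fin d) // ∀ i, x i ∈ Set.Icc (0:ℝ) 1})

lemma coord_le_dist {d : ℕ} (a b : EuclideanSpace ℝ (Fin d)) (i : Fin d) :
    dist (a i) (b i) ≤ dist a b := by
  rw [EuclideanSpace.dist_eq]
  have h1 : dist (a i) (b i) ^ 2 ≤ ∑ j, dist (a j) (b j) ^ 2 :=
    Finset.single_le_sum (f := fun j => dist (a j) (b j) ^ 2)
      (fun j _ => sq_nonneg _) (Finset.mem_univ i)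
  calc dist (a i) (b i) = Real.sqrt (dist (a i) (b i) ^ 2) := (Real.sqrt_sq dist_nonneg).symm
    _ ≤ _ := Real.sqrt_le_sqrt h1

lemma cube_dist_le {d : ℕ} (a b : UnitCube d) : dist a b ≤ Real.sqrt d := by
  change dist a.1 b.1 ≤ _
  rw [EuclideanSpace.dist_eq]
  have h1 : ∑ j, dist (a.1 j) (b.1 j) ^ 2 ≤ (d : ℝ) := by
    have h2 : ∀ j ∈ Finset.univ, dist (a.1 j) (b.1 j) ^ 2 ≤ 1 := by
      intro j _
      have ha := a.2 j; have hb := b.2 j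
      have habs : |a.1 j - b.1 j| ≤ 1 := by
        rw [abs_le]
        exact ⟨by linarith [ha.1, ha.2, hb.1, hb.2], by linarith [ha.1, ha.2, hb.1, hb.2]⟩
      calc dist (a.1 j) (b.1 j) ^ 2 = |a.1 j - b.1 j| ^ 2 := by rw [Real.dist_eq]
        _ ≤ 1 ^ 2 := pow_le_pow_left₀ (abs_nonneg _) habs 2
        _ = 1 := one_pow 2
    calc ∑ j, dist (a.1 j) (b.1 j) ^ 2 ≤ ∑ _j : Fin d, (1:ℝ) := Finset.sum_le_sum h2
      _ = (d : ℝ) := by simp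
  exact Real.sqrt_le_sqrt h1

instance cubeCompact (d : ℕ) : CompactSpace (UnitCube d) := by
  have hS : IsCompact {x : EuclideanSpace ℝ (Fin d) | ∀ i, x i ∈ Set.Icc (0:ℝ) 1} := by
    apply Metric.isCompact_of_isClosed_isBounded
    · have he : {x : EuclideanSpace ℝ (Fin d) | ∀ i, x i ∈ Set.Icc (0:ℝ) 1}
          = ⋂ i, (EuclideanSpace.proj (𝕜 := ℝ) i) ⁻¹' Set.Icc (0:ℝ) 1 := by
        ext x; simp [EuclideanSpace.proj]
      rw [he]
      exact isClosed_iInter fun i =>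
        IsClosed.preimage (EuclideanSpace.proj i).continuous isClosed_Icc
    · apply Metric.isBounded_iff_subset_closedBall (0 : EuclideanSpace ℝ (Fin d)) |>.2
      refine ⟨Real.sqrt d, fun x hx => ?_⟩
      simp only [Metric.mem_closedBall, dist_zero_right]
      rw [EuclideanSpace.norm_eq]
      have h1 : ∑ j, ‖x j‖ ^ 2 ≤ (d : ℝ) := by
        have h2 : ∀ j ∈ Finset.univ, ‖x j‖ ^ 2 ≤ 1 := by
          intro j _
          have hj := hx j
          have h3 : ‖x j‖ ≤ 1 := by
            rw [Real.norm_eq_abs, abs_le]; exact ⟨by linarith [hj.1], hj.2⟩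
          calc ‖x j‖ ^ 2 ≤ 1 ^ 2 := pow_le_pow_left₀ (norm_nonneg _) h3 2
            _ = 1 := one_pow 2
        calc ∑ j, ‖x j‖ ^ 2 ≤ ∑ _j : Fin d, (1:ℝ) := Finset.sum_le_sum h2
          _ = (d : ℝ) := by simp
      exact Real.sqrt_le_sqrt h1
  exact isCompact_iff_compactSpace.mp hS

/-- if `X` contains a bi-Lipschitz image of the cube `I^d`, then for
every `d' > d` there are `C > 0` and homotheties `h_n : I^d → I^d` of ratio
`C·n^{-d'}`, with images pairwise separated by at least `C·n^{-d'}`, such that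
`x̄ ↦ closure {h_n(x̄_n)}` is a homothetic embedding of ratio `C` from the Banach
cube `BC(I^d, ∞, (n^{-d'}))` into the space of closed subsets of `I^d` with the
Hausdorff metric. (Indices are shifted by one so that they start at `1`.) -/
theorem stmt19 {X : Type*} [MetricSpace X] (d : ℕ) (hd : 1 ≤ d)
    (φ : UnitCube d → X) (c₁ c₂ : ℝ) (hc₁ : 0 < c₁) (hc₂ : 0 < c₂)
    (hφ : ∀ x y : UnitCube d,
      c₁ * dist x y ≤ dist (φ x) (φ y) ∧ dist (φ x) (φ y) ≤ c₂ * dist x y) :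
    ∀ d' : ℝ, (d : ℝ) < d' →
      ∃ C : ℝ, 0 < C ∧
        ∃ h : ℕ → UnitCube d → UnitCube d,
          (∀ n, ∀ x y : UnitCube d,
            dist (h n x) (h n y) = C * ((n : ℝ) + 1) ^ (-d') * dist x y) ∧
          (∀ m n : ℕ, m ≠ n → ∀ x y : UnitCube d,
            C * ((max m n : ℕ) + 1 : ℝ) ^ (-d') ≤ dist (h m x) (h n y)) ∧
          ∃ H : (ℕ → UnitCube d) → NonemptyCompacts (UnitCube d),
            (∀ x : ℕ → UnitCube d,
              (H x : Set (UnitCube d)) = closure (Set.range fun n => h n (x n))) ∧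
            (∀ x y : ℕ → UnitCube d,
              dist (H x) (H y) =
                C * ⨆ n : ℕ, ((n : ℝ) + 1) ^ (-d') * dist (x n) (y n)) := by
  intro d' hd'
  have hd1 : (1:ℝ) ≤ (d:ℝ) := by exact_mod_cast hd
  have hd'1 : (1:ℝ) < d' := lt_of_le_of_lt hd1 hd'
  set s : ℕ → ℝ := fun n => ((n:ℝ) + 1) ^ (-d') with hs_def
  have hs_pos : ∀ n, 0 < s n := fun n => Real.rpow_pos_of_pos (by positivity) _
  have hs_anti : ∀ m n : ℕ, m ≤ n → s n ≤ s m := by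
    intro m n hmn
    have hmn' : (m:ℝ) + 1 ≤ (n:ℝ) + 1 := by
      have : (m:ℝ) ≤ (n:ℝ) := by exact_mod_cast hmn
      linarith
    exact Real.rpow_le_rpow_of_nonpos (by positivity) hmn' (by linarith)
  have hs_le_one : ∀ n, s n ≤ 1 := by
    intro n
    have h1 : (1:ℝ) ≤ (n:ℝ) + 1 := by
      have : (0:ℝ) ≤ (n:ℝ) := Nat.cast_nonneg n
      linarith
    exact Real.rpow_le_one_of_one_le_of_nonpos h1 (by linarith)
  have hsum : Summable s := by
    have h0 : Summable (fun n : ℕ => (n:ℝ) ^ (-d')) := Real.summable_nat_rpow.2 (by linarith)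
    have h1 := (summable_nat_add_iff 1).2 h0
    refine h1.congr fun n => ?_
    simp only [hs_def]
    congr 1
    push_cast
    ring
  have hs_ratio : ∀ n, (2:ℝ) ^ (-d') * s n ≤ s (n + 1) := by
    intro n
    have hmul : (2:ℝ) ^ (-d') * s n = ((2:ℝ) * ((n:ℝ) + 1)) ^ (-d') := by
      rw [Real.mul_rpow (by norm_num) (by positivity)]
    rw [hmul]
    have hbase : ((n:ℝ) + 1) + 1 ≤ 2 * ((n:ℝ) + 1) := by
      have : (0:ℝ) ≤ n := Nat.cast_nonneg n; linarith
    have hp : (0:ℝ) < (n:ℝ) + 1 + 1 := by positivity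
    have hz : -d' ≤ 0 := by linarith
    have hmono := Real.rpow_le_rpow_of_nonpos hp hbase hz
    have hval : s (n + 1) = ((n:ℝ) + 1 + 1) ^ (-d') := by
      simp only [hs_def]
      congr 1
      push_cast
      ring
    rw [hval]
    exact hmono
  -- tail sums
  set ttail : ℕ → ℝ := fun n => ∑' k, s (k + n) with httail_def
  have htail_summ : ∀ n, Summable (fun k => s (k + n)) := fun n => (summable_nat_add_iff n).2 hsum
  have htail_pos : ∀ n, 0 < ttail n := fun n =>
    Summable.tsum_pos (htail_summ n) (fun i => (hs_pos _).le) 0 (hs_pos _)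
  have htail_step : ∀ n, ttail n = s n + ttail (n + 1) := by
    intro n
    show (∑' k, s (k + n)) = s n + ∑' k, s (k + (n + 1))
    rw [Summable.tsum_eq_zero_add (htail_summ n)]
    congr 1
    · simp
    · apply tsum_congr; intro k; congr 1; omega
  set A : ℝ := 1 + Real.sqrt d * (2:ℝ) ^ d' with hA_def
  have hA1 : 1 ≤ A := le_add_of_nonneg_right (by positivity)
  have hA0 : 0 < A := by linarith
  set u : ℕ → ℝ := fun n => A * ttail (n + 1) with hu_def
  have hu_pos : ∀ n, 0 < u n := fun n => mul_pos hA0 (htail_pos _)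
  have hu_step : ∀ n, u n = A * s (n + 1) + u (n + 1) := by
    intro n
    simp only [hu_def]
    rw [htail_step (n + 1)]
    ring
  have hu_succ_le : ∀ n, u (n + 1) ≤ u n := by
    intro n
    rw [hu_step n]
    nlinarith [hs_pos (n+1)]
  have hu_anti : ∀ m n : ℕ, m ≤ n → u n ≤ u m :=
    fun m n hmn => antitone_nat_of_succ_le hu_succ_le hmn
  have hu_gap : ∀ m n : ℕ, m < n → u n + A * s (m + 1) ≤ u m := by
    intro m n hmn
    have h1 : u n ≤ u (m + 1) := hu_anti _ _ hmn
    rw [hu_step m]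
    linarith
  set B : ℝ := u 0 + s 0 with hB_def
  have hB : 0 < B := by have := hu_pos 0; have := hs_pos 0; linarith
  set C : ℝ := B⁻¹ with hC_def
  have hC : 0 < C := inv_pos.2 hB
  have hCB : C * B = 1 := inv_mul_cancel₀ hB.ne'
  have hbound : ∀ n, u n + s n ≤ B := by
    intro n
    cases n with
    | zero => exact le_of_eq rfl
    | succ k =>
      have h1 : s (k + 1) ≤ A * s (k + 1) := le_mul_of_one_le_left (hs_pos _).le hA1
      have h2 : u k = A * s (k + 1) + u (k + 1) := hu_step k
      have h3 : u k ≤ u 0 := hu_anti 0 k (Nat.zero_le k)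
      have := hs_pos 0
      rw [hB_def]; linarith
  have hCmem : ∀ n, C * (u n + s n) ≤ 1 := by
    intro n
    calc C * (u n + s n) ≤ C * B := mul_le_mul_of_nonneg_left (hbound n) hC.le
      _ = 1 := hCB
  -- the homotheties
  set i0 : Fin d := ⟨0, hd⟩ with hi0_def
  set e0 : EuclideanSpace ℝ (Fin d) := EuclideanSpace.single i0 (1:ℝ) with he0_def
  have happly : ∀ (n : ℕ) (x : UnitCube d) (i : Fin d),
      ((C * u n) • e0 + (C * s n) • x.1) i
        = C * u n * (if i = i0 then 1 else 0) + C * s n * x.1 i := by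
    intro n x i
    simp [he0_def, EuclideanSpace.single_apply, mul_ite]
  have hmem : ∀ (n : ℕ) (x : UnitCube d) (i : Fin d),
      ((C * u n) • e0 + (C * s n) • x.1) i ∈ Set.Icc (0:ℝ) 1 := by
    intro n x i
    rw [happly n x i]
    have hx := x.2 i
    have h1 := hu_pos n; have h2 := hs_pos n; have h3 := hCmem n
    have p1 : 0 ≤ C * u n := by positivity
    have p2 : 0 ≤ C * s n := by positivity
    have p3 : 0 ≤ C * s n * x.1 i := mul_nonneg p2 hx.1
    have p4 : C * s n * x.1 i ≤ C * s n := mul_le_of_le_one_right p2 hx.2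
    have p5 : C * (u n + s n) = C * u n + C * s n := by ring
    by_cases hi : i = i0 <;> simp [hi] <;> constructor
    · rw [hi] at p3 p4; linarith
    · rw [hi] at p3 p4; linarith
    · linarith
    · linarith
  set h : ℕ → UnitCube d → UnitCube d := fun n x =>
    ⟨(C * u n) • e0 + (C * s n) • x.1, hmem n x⟩ with hh_def
  have hdist : ∀ n (x y : UnitCube d), dist (h n x) (h n y) = C * s n * dist x y := by
    intro n x y
    change dist (h n x).1 (h n y).1 = C * s n * dist x.1 y.1
    rw [hh_def]
    simp only
    rw [dist_add_left, dist_smul₀, Real.norm_eq_abs,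
      abs_of_nonneg (by positivity : (0:ℝ) ≤ C * s n)]
  -- separation
  have hsqrt1 : 1 ≤ Real.sqrt d := by
    rw [show (1:ℝ) = Real.sqrt 1 by simp]
    exact Real.sqrt_le_sqrt hd1
  have hsqrt0 : 0 < Real.sqrt d := by linarith
  have hsep : ∀ m n : ℕ, m < n → ∀ x y : UnitCube d,
      C * (Real.sqrt d * s m) ≤ dist (h m x) (h n y) := by
    intro m n hmn x y
    have key : Real.sqrt d * s m ≤ u m - u n - s n := by
      have h1 : u n + A * s (m + 1) ≤ u m := hu_gap m n hmn
      have h2 : s n ≤ s (m + 1) := hs_anti _ _ hmn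
      have h3 : (2:ℝ) ^ (-d') * s m ≤ s (m + 1) := hs_ratio m
      have h4 : A - 1 = Real.sqrt d * (2:ℝ) ^ d' := by rw [hA_def]; ring
      have h5 : (A - 1) * ((2:ℝ) ^ (-d') * s m) ≤ (A - 1) * s (m + 1) :=
        mul_le_mul_of_nonneg_left h3 (by linarith)
      have h6 : (A - 1) * ((2:ℝ) ^ (-d') * s m) = Real.sqrt d * s m := by
        rw [h4, Real.rpow_neg (by norm_num : (0:ℝ) ≤ 2)]
        have h2d : (2:ℝ) ^ d' ≠ 0 := (Real.rpow_pos_of_pos two_pos d').ne'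
        field_simp
      nlinarith
    have hcoord : dist ((h m x).1 i0) ((h n y).1 i0) ≤ dist (h m x) (h n y) := by
      show _ ≤ dist (h m x).1 (h n y).1
      exact coord_le_dist _ _ i0
    have hvm : (h m x).1 i0 = C * u m + C * s m * x.1 i0 := by
      rw [hh_def]; simp only; rw [happly]; simp
    have hvn : (h n y).1 i0 = C * u n + C * s n * y.1 i0 := by
      rw [hh_def]; simp only; rw [happly]; simp
    have hxc := (x.2 i0); have hyc := (y.2 i0)
    have hgap : C * (Real.sqrt d * s m) ≤ (h m x).1 i0 - (h n y).1 i0 := by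
      rw [hvm, hvn]
      have h7 : u m - u n - s n ≥ Real.sqrt d * s m := key
      have h8 : 0 ≤ C * s m * x.1 i0 :=
        mul_nonneg (mul_nonneg hC.le (hs_pos m).le) hxc.1
      have h9 : C * s n * y.1 i0 ≤ C * s n :=
        mul_le_of_le_one_right (mul_nonneg hC.le (hs_pos n).le) hyc.2
      have h10 : C * (Real.sqrt d * s m) ≤ C * (u m - u n - s n) :=
        mul_le_mul_of_nonneg_left h7 hC.le
      have h11 : C * (u m - u n - s n) = C * u m - C * u n - C * s n := by ring
      linarith
    calc C * (Real.sqrt d * s m) ≤ (h m x).1 i0 - (h n y).1 i0 := hgap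
      _ ≤ |(h m x).1 i0 - (h n y).1 i0| := le_abs_self _
      _ = dist ((h m x).1 i0) ((h n y).1 i0) := (Real.dist_eq _ _).symm
      _ ≤ dist (h m x) (h n y) := hcoord
  have hsep' : ∀ m n : ℕ, m ≠ n → ∀ x y : UnitCube d,
      C * (Real.sqrt d * s (min m n)) ≤ dist (h m x) (h n y) := by
    intro m n hmn x y
    rcases lt_or_gt_of_ne hmn with hlt | hgt
    · rw [min_eq_left hlt.le]; exact hsep m n hlt x y
    · rw [min_eq_right hgt.le, dist_comm]; exact hsep n m hgt y x
  refine ⟨C, hC, h, hdist, ?_, ?_⟩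
  · -- separation statement
    intro m n hmn x y
    have h1 : s (max m n) ≤ s (min m n) := hs_anti _ _ (min_le_max)
    have h2 : s (min m n) ≤ Real.sqrt d * s (min m n) :=
      le_mul_of_one_le_left (hs_pos _).le hsqrt1
    have h3 : C * (Real.sqrt d * s (min m n)) ≤ dist (h m x) (h n y) := hsep' m n hmn x y
    have h4 : ((max m n : ℕ) + 1 : ℝ) ^ (-d') = s (max m n) := by
      rw [hs_def]
    rw [h4]
    nlinarith
  · -- the Hausdorff embedding
    refine ⟨fun x => ⟨⟨closure (Set.range fun n => h n (x n)), isClosed_closure.isCompact⟩,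
      (Set.range_nonempty _).closure⟩, fun x => rfl, ?_⟩
    intro x y
    set f : ℕ → ℝ := fun n => s n * dist (x n) (y n) with hf_def
    have hf_nonneg : ∀ n, 0 ≤ f n := fun n => mul_nonneg (hs_pos n).le dist_nonneg
    have hf_le : ∀ n, f n ≤ Real.sqrt d := by
      intro n
      calc f n ≤ 1 * Real.sqrt d :=
        mul_le_mul (hs_le_one n) (cube_dist_le _ _) dist_nonneg zero_le_one
        _ = Real.sqrt d := one_mul _
    have hf_bdd : BddAbove (Set.range f) := ⟨Real.sqrt d, by rintro _ ⟨n, rfl⟩; exact hf_le n⟩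
    set R : ℝ := ⨆ n, f n with hR_def
    have hR_nonneg : 0 ≤ R := le_trans (hf_nonneg 0) (le_ciSup hf_bdd 0)
    have hfR : ∀ n, f n ≤ R := fun n => le_ciSup hf_bdd n
    show dist _ _ = C * R
    rw [Metric.NonemptyCompacts.dist_eq]
    show Metric.hausdorffDist (closure (Set.range fun n => h n (x n)))
      (closure (Set.range fun n => h n (y n))) = C * R
    rw [Metric.hausdorffDist_closure]
    set Sx := Set.range fun n => h n (x n) with hSx_def
    set Sy := Set.range fun n => h n (y n) with hSy_def
    have hSxne : Sx.Nonempty := Set.range_nonempty _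
    have hSyne : Sy.Nonempty := Set.range_nonempty _
    have hfin : EMetric.hausdorffEdist Sx Sy ≠ ⊤ :=
      Metric.hausdorffEdist_ne_top_of_nonempty_of_bounded hSxne hSyne
        ((isCompact_univ.isBounded).subset (Set.subset_univ _))
        ((isCompact_univ.isBounded).subset (Set.subset_univ _))
    apply le_antisymm
    · apply Metric.hausdorffDist_le_of_mem_dist (by positivity)
      · rintro p ⟨n, rfl⟩
        refine ⟨h n (y n), Set.mem_range_self n, ?_⟩
        rw [hdist]
        calc C * s n * dist (x n) (y n) = C * f n := by rw [hf_def]; ring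
          _ ≤ C * R := mul_le_mul_of_nonneg_left (hfR n) hC.le
      · rintro p ⟨n, rfl⟩
        refine ⟨h n (x n), Set.mem_range_self n, ?_⟩
        rw [dist_comm, hdist]
        calc C * s n * dist (x n) (y n) = C * f n := by rw [hf_def]; ring
          _ ≤ C * R := mul_le_mul_of_nonneg_left (hfR n) hC.le
    · have key : ∀ n, C * f n ≤ Metric.hausdorffDist Sx Sy := by
        intro n
        have h1 : C * f n ≤ Metric.infDist (h n (x n)) Sy := by
          by_contra hlt
          push_neg at hlt
          obtain ⟨q, hqmem, hq⟩ := (Metric.infDist_lt_iff hSyne).1 hlt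
          obtain ⟨m, rfl⟩ := hqmem
          rcases eq_or_ne m n with rfl | hmn
          · rw [hdist] at hq
            have heq : C * f m = C * s m * dist (x m) (y m) := by
              simp only [hf_def]; ring
            rw [heq] at hq
            exact lt_irrefl _ hq
          · have hss := hsep' n m hmn.symm (x n) (y m)
            have hmin : s n ≤ s (min n m) := hs_anti _ _ (min_le_left n m)
            have hdxy : dist (x n) (y n) ≤ Real.sqrt d := cube_dist_le _ _
            have hcf : C * f n ≤ C * (Real.sqrt d * s (min n m)) := by
              have h5 : s n * dist (x n) (y n) ≤ s (min n m) * Real.sqrt d := by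
                have := mul_le_mul hmin hdxy dist_nonneg (hs_pos (min n m)).le
                linarith
              have h6 : f n = s n * dist (x n) (y n) := rfl
              rw [h6]
              have h7 : Real.sqrt d * s (min n m) = s (min n m) * Real.sqrt d := by ring
              rw [h7]
              exact mul_le_mul_of_nonneg_left h5 hC.le
            linarith
        exact h1.trans (Metric.infDist_le_hausdorffDist_of_mem (Set.mem_range_self n) hfin)
      have hRle : R ≤ Metric.hausdorffDist Sx Sy / C :=
        ciSup_le fun n => (le_div_iff₀ hC).2 (by rw [mul_comm]; exact key n)
      calc C * R ≤ C * (Metric.hausdorffDist Sx Sy / C) :=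
        mul_le_mul_of_nonneg_left hRle hC.le
        _ = Metric.hausdorffDist Sx Sy := by field_simp
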